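/- Let p ≥ 2, ν ∈ ℚ with ν < 0, and let H be the field of Hahn series over ℂ with value group ℚ, with automorphism φ defined by φ(Σ f_γ z^γ) = Σ f_γ z^{pγ}. Set h = 1 + z^{−ν/(p−1)} ∈ H. Let R be a difference ring extension of H containing e_1 with φ(e_1) = e_1 and ℓ_{1,1} with φ(ℓ_{1,1}) = ℓ_{1,1} + e_1. Then y_2 = (Σ_{k ≤ −1} z^{p^k ν/(p−1)})·e_1 + ℓ_{1,1} satisfies (φ − z^ν)∘h^{−1}∘(φ − 1) applied to y_2 equals 0, where z^ν denotes the multiplication operator by the monomial z^ν. -/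

import Mathlib

/-- Let `p ≥ 2`, `ν ∈ ℚ_{<0}`, `H` the field of Hahn series over `ℂ` with value group `ℚ`
and exponent-rescaling automorphism `Φ`, `h = 1 + z^{−ν/(p−1)} ∈ H`. Let `R` be a
difference ring extension of `H` (via `ι`, with automorphism `φ` extending `Φ`) containing
`e₁` with `φ e₁ = e₁` and `ℓ₁₁` with `φ ℓ₁₁ = ℓ₁₁ + e₁`. Then
`y₂ = (Σ_{k ≤ −1} z^{p^k ν/(p−1)})·e₁ + ℓ₁₁` is annihilated by the Mahler operator
`(φ − z^ν) ∘ h⁻¹ ∘ (φ − 1)`. -/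
theorem mahler_example_solution (p : ℕ) (hp : 2 ≤ p) (ν : ℚ) (hν : ν < 0)
    (R : Type*) [CommRing R]
    (ι : HahnSeries ℚ ℂ →+* R) (hι : Function.Injective ι)
    (Φ : HahnSeries ℚ ℂ →+* HahnSeries ℚ ℂ)
    (hΦ : ∀ (f : HahnSeries ℚ ℂ) (γ : ℚ), (Φ f).coeff γ = f.coeff (γ / p))
    (φ : R →+* R) (hφι : ∀ f : HahnSeries ℚ ℂ, φ (ι f) = ι (Φ f))
    (e1 ℓ11 : R) (he1 : φ e1 = e1) (hℓ11 : φ ℓ11 = ℓ11 + e1)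
    (S : HahnSeries ℚ ℂ)
    (hS1 : ∀ k : ℤ, k ≤ -1 → S.coeff ((p : ℚ) ^ k * ν / ((p : ℚ) - 1)) = 1)
    (hS0 : ∀ γ : ℚ, (∀ k : ℤ, k ≤ -1 → γ ≠ (p : ℚ) ^ k * ν / ((p : ℚ) - 1)) →
      S.coeff γ = 0) :
    let h : HahnSeries ℚ ℂ := 1 + HahnSeries.single (-ν / ((p : ℚ) - 1)) 1
    let y2 : R := ι S * e1 + ℓ11
    let w : R := ι h⁻¹ * (φ y2 - y2)
    φ w - ι (HahnSeries.single ν 1) * w = 0 := by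
  intro h y2 w
  have hp1 : (1:ℚ) < (p:ℚ) := by exact_mod_cast (by omega : 1 < p)
  have hp0 : (p:ℚ) ≠ 0 := by positivity
  have hpm1 : (p:ℚ) - 1 ≠ 0 := by
    have := hp1; intro hc; nlinarith
  have hν0 : ν ≠ 0 := hν.ne
  -- the exponents
  set c : ℤ → ℚ := fun k => (p : ℚ) ^ k * ν / ((p : ℚ) - 1) with hc
  have hcinj : Function.Injective c := by
    intro j k hjk
    have h2 : (p:ℚ) ^ j = (p:ℚ) ^ k := by
      simp only [hc] at hjk
      field_simp at hjk
      exact hjk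
    exact zpow_right_injective₀ (by positivity) hp1.ne' h2
  have hcdiv : ∀ k : ℤ, c k / (p:ℚ) = c (k - 1) := by
    intro k
    simp only [hc]
    rw [zpow_sub₀ hp0]
    field_simp
  set a : ℚ := ν / ((p:ℚ) - 1) with ha
  have ha0 : c 0 = a := by simp [hc, ha]
  have hane : a ≠ 0 := by
    rw [ha]; exact div_ne_zero hν0 hpm1
  -- Step 1 : Φ S = S + single a 1
  have hΦS : Φ S = S + HahnSeries.single a 1 := by
    ext γ
    rw [hΦ]
    by_cases hγa : γ = a
    · subst hγa
      have h1 : S.coeff (a / p) = 1 := by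
        rw [← ha0, hcdiv]
        exact hS1 (0 - 1) (by omega)
      have h2 : S.coeff a = 0 := by
        apply hS0
        intro k hk hak
        have := hcinj (ha0.trans hak : c 0 = c k)
        omega
      simp [h1, h2]
    · rw [HahnSeries.coeff_add, HahnSeries.coeff_single_of_ne hγa, add_zero]
      by_cases hγc : ∃ k : ℤ, k ≤ -1 ∧ γ = c k
      · obtain ⟨k, hk, rfl⟩ := hγc
        rw [hcdiv, hS1 k hk, hS1 (k - 1) (by omega)]
      · push_neg at hγc
        rw [hS0 γ (fun k hk => hγc k hk), hS0]
        intro k hk hke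
        have hke' : γ = c (k + 1) := by
          have hγeq : γ = c k * p := (div_eq_iff hp0).mp hke
          rw [hγeq]
          simp only [hc]
          rw [zpow_add₀ hp0]
          field_simp
        rcases lt_or_eq_of_le (by omega : k + 1 ≤ 0) with hlt | heq
        · exact hγc (k+1) (by omega) hke'
        · exact hγa (by rw [hke', heq, ha0])
  -- Step 2 : Φ of a single
  have hΦsingle : ∀ b : ℚ, Φ (HahnSeries.single b (1:ℂ)) =
      HahnSeries.single ((p:ℚ) * b) 1 := by
    intro b
    ext γ
    rw [hΦ]
    by_cases hγ : γ = (p:ℚ) * b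
    · subst hγ
      rw [mul_div_cancel_left₀ _ hp0,
        HahnSeries.coeff_single_same, HahnSeries.coeff_single_same]
    · rw [HahnSeries.coeff_single_of_ne hγ, HahnSeries.coeff_single_of_ne]
      intro hcon
      exact hγ (by field_simp at hcon; linarith)
  -- Step 3 : h ≠ 0
  have hne : h ≠ 0 := by
    intro h0
    have := congrArg (fun f : HahnSeries ℚ ℂ => f.coeff 0) h0
    simp only [h, HahnSeries.coeff_add, HahnSeries.coeff_one, if_pos rfl,
      HahnSeries.coeff_zero] at this
    rw [HahnSeries.coeff_single_of_ne
      (div_ne_zero (neg_ne_zero.mpr hν0) hpm1).symm] at this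
    simp at this
  -- Step 4 : single a 1 + 1 = single a 1 * h
  have hfac : HahnSeries.single a (1:ℂ) + 1 = HahnSeries.single a 1 * h := by
    have hmν : -ν / ((p:ℚ) - 1) = -a := by rw [ha, neg_div]
    show _ = HahnSeries.single a 1 * (1 + HahnSeries.single (-ν / ((p : ℚ) - 1)) 1)
    rw [hmν, mul_add, mul_one, HahnSeries.single_mul_single, add_neg_cancel, mul_one]
    simp
  have hinv : h⁻¹ * (HahnSeries.single a (1:ℂ) + 1) = HahnSeries.single a 1 := by
    rw [hfac, mul_comm (HahnSeries.single a (1:ℂ)) h, ← mul_assoc,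
      inv_mul_cancel₀ hne, one_mul]
  -- Step 5 : compute φ y2 - y2
  have hy : φ y2 - y2 = ι (HahnSeries.single a 1 + 1) * e1 := by
    show φ (ι S * e1 + ℓ11) - (ι S * e1 + ℓ11) = _
    rw [map_add, map_mul, hφι, he1, hℓ11, hΦS]
    simp only [map_add, map_one]
    ring
  have hw : w = ι (HahnSeries.single a 1) * e1 := by
    show ι h⁻¹ * (φ y2 - y2) = _
    rw [hy, ← mul_assoc, ← map_mul, hinv]
  -- Step 6 : conclude
  have hpa : (p:ℚ) * a = ν + a := by
    rw [ha]; field_simp; ring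
  rw [hw, map_mul, hφι, hΦsingle, he1, ← mul_assoc, ← map_mul,
    HahnSeries.single_mul_single, one_mul, hpa]
  ring
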